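/- For the Gaussian measurement functions m_q(θ) = (1/q!)(θ²/(4σ²))^q e^{−θ²/(4σ²)}, q ∈ ℕ, the sum over all q of N·m_q'(θ)²/m_q(θ) equals N/σ² for every θ > 0. -/

import Mathlib

open Real

lemma exp_tsum (x : ℝ) : ∑' q : ℕ, x ^ q / (Nat.factorial q : ℝ) = Real.exp x := by
  rw [Real.exp_eq_exp_ℝ, NormedSpace.exp_eq_tsum_div]

lemma summable_q2 (x : ℝ) (hx : 0 ≤ x) :
    Summable (fun q : ℕ => (q : ℝ) ^ 2 * x ^ q / (Nat.factorial q : ℝ)) := by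
  refine Summable.of_nonneg_of_le (fun q => by positivity) ?_
    (Real.summable_pow_div_factorial (4 * x))
  · intro q
    rw [mul_pow, div_le_div_iff_of_pos_right (by positivity)]
    have h1 : (q : ℝ) ≤ 2 ^ q := by exact_mod_cast (Nat.lt_two_pow_self (n := q)).le
    have : (q : ℝ) ^ 2 ≤ (2 ^ q) ^ 2 := by
      apply pow_le_pow_left₀ (by positivity) h1
    calc (q:ℝ)^2 * x^q ≤ (2^q)^2 * x^q := by
          apply mul_le_mul_of_nonneg_right this (by positivity)
      _ = 4^q * x^q := by rw [← pow_mul, mul_comm q 2, pow_mul]; norm_num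

lemma summable_q1 (x : ℝ) (hx : 0 ≤ x) :
    Summable (fun q : ℕ => (q : ℝ) * x ^ q / (Nat.factorial q : ℝ)) := by
  refine Summable.of_nonneg_of_le (fun q => by positivity) ?_
    (Real.summable_pow_div_factorial (2 * x))
  · intro q
    rw [mul_pow, div_le_div_iff_of_pos_right (by positivity)]
    have h1 : (q : ℝ) ≤ 2 ^ q := by exact_mod_cast (Nat.lt_two_pow_self (n := q)).le
    exact mul_le_mul_of_nonneg_right h1 (by positivity)

lemma sum_q1 (x : ℝ) (hx : 0 ≤ x) :
    ∑' q : ℕ, (q : ℝ) * x ^ q / (Nat.factorial q : ℝ) = x * Real.exp x := by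
  rw [Summable.tsum_eq_zero_add (summable_q1 x hx)]
  simp only [Nat.cast_zero, zero_mul, pow_zero, Nat.factorial_zero, Nat.cast_one, zero_div,
    zero_add]
  have : ∀ q : ℕ, ((q : ℝ) + 1) * x ^ (q + 1) / (Nat.factorial (q + 1) : ℝ)
      = x * (x ^ q / (Nat.factorial q : ℝ)) := by
    intro q
    rw [Nat.factorial_succ, pow_succ]
    push_cast
    have hq : (Nat.factorial q : ℝ) ≠ 0 := by positivity
    field_simp
  simp only [Nat.cast_add, Nat.cast_one] at this ⊢
  rw [tsum_congr this, tsum_mul_left, exp_tsum]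

lemma sum_q2 (x : ℝ) (hx : 0 ≤ x) :
    ∑' q : ℕ, (q : ℝ) ^ 2 * x ^ q / (Nat.factorial q : ℝ)
      = (x ^ 2 + x) * Real.exp x := by
  rw [Summable.tsum_eq_zero_add (summable_q2 x hx)]
  simp only [Nat.cast_zero, pow_zero, Nat.factorial_zero, Nat.cast_one, zero_div, zero_add,
    ne_eq, OfNat.ofNat_ne_zero, not_false_eq_true, zero_pow, zero_mul]
  have : ∀ q : ℕ, ((q : ℝ) + 1) ^ 2 * x ^ (q + 1) / (Nat.factorial (q + 1) : ℝ)
      = x * ((q : ℝ) * x ^ q / (Nat.factorial q : ℝ)) + x * (x ^ q / (Nat.factorial q : ℝ)) := by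
    intro q
    rw [Nat.factorial_succ, pow_succ]
    have hq : (Nat.factorial q : ℝ) ≠ 0 := by positivity
    have hq1 : ((q : ℝ) + 1) ≠ 0 := by positivity
    push_cast
    field_simp
    ring
  simp only [Nat.cast_add, Nat.cast_one] at this ⊢
  rw [tsum_congr this, Summable.tsum_add ((summable_q1 x hx).mul_left x)
    ((Real.summable_pow_div_factorial x).mul_left x),
    tsum_mul_left, tsum_mul_left, sum_q1 x hx, exp_tsum]
  ring

lemma poisson_var (x : ℝ) (hx : 0 ≤ x) :
    ∑' q : ℕ, ((q : ℝ) - x) ^ 2 * x ^ q / (Nat.factorial q : ℝ) = x * Real.exp x := by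
  have key : ∀ q : ℕ, ((q : ℝ) - x) ^ 2 * x ^ q / (Nat.factorial q : ℝ)
      = (q : ℝ) ^ 2 * x ^ q / (Nat.factorial q : ℝ)
        + (-(2 * x)) * ((q : ℝ) * x ^ q / (Nat.factorial q : ℝ))
        + x ^ 2 * (x ^ q / (Nat.factorial q : ℝ)) := by
    intro q; field_simp; ring
  rw [tsum_congr key, Summable.tsum_add (((summable_q2 x hx).add
    ((summable_q1 x hx).mul_left _))) ((Real.summable_pow_div_factorial x).mul_left _),
    Summable.tsum_add (summable_q2 x hx) ((summable_q1 x hx).mul_left _),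
    tsum_mul_left, tsum_mul_left, sum_q1 x hx, sum_q2 x hx, exp_tsum]
  ring


/-- For the Gaussian measurement functions
`m_q(θ) = (1/q!)(θ²/(4σ²))^q e^{−θ²/(4σ²)}`, the total Fisher information
`∑_q N m_q'(θ)²/m_q(θ)` equals `N/σ²` for every `θ > 0`. -/
theorem gaussian_total_fisher_information (σ N θ : ℝ) (hσ : 0 < σ) (hN : 0 < N)
    (hθ : 0 < θ) :
    ∑' q : ℕ,
        N * (deriv (fun t : ℝ =>
            (1 / (Nat.factorial q : ℝ)) * (t ^ 2 / (4 * σ ^ 2)) ^ q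
              * Real.exp (-(t ^ 2 / (4 * σ ^ 2)))) θ) ^ 2 /
          ((1 / (Nat.factorial q : ℝ)) * (θ ^ 2 / (4 * σ ^ 2)) ^ q
            * Real.exp (-(θ ^ 2 / (4 * σ ^ 2))))
      = N / σ ^ 2 := by
  have hσ2 : (4 * σ ^ 2) ≠ 0 := by positivity
  have hx : 0 < θ ^ 2 / (4 * σ ^ 2) := by positivity
  have hd : ∀ q : ℕ, deriv (fun t : ℝ =>
      (1 / (Nat.factorial q : ℝ)) * (t ^ 2 / (4 * σ ^ 2)) ^ q
        * Real.exp (-(t ^ 2 / (4 * σ ^ 2)))) θ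
      = (1 / (Nat.factorial q : ℝ)) * ((q : ℝ) * (θ ^ 2 / (4 * σ ^ 2)) ^ (q - 1)
          * (2 * θ / (4 * σ ^ 2))) * Real.exp (-(θ ^ 2 / (4 * σ ^ 2)))
        + (1 / (Nat.factorial q : ℝ)) * (θ ^ 2 / (4 * σ ^ 2)) ^ q
          * (Real.exp (-(θ ^ 2 / (4 * σ ^ 2))) * -(2 * θ / (4 * σ ^ 2))) := by
    intro q
    have h1 : HasDerivAt (fun t : ℝ => t ^ 2 / (4 * σ ^ 2)) (2 * θ / (4 * σ ^ 2)) θ := by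
      simpa using (hasDerivAt_pow 2 θ).div_const (4 * σ ^ 2)
    have h2 := h1.pow q
    have h3 := h1.neg.exp
    exact ((h2.const_mul (1 / (Nat.factorial q : ℝ))).mul h3).deriv
  have key : ∀ q : ℕ, N * (deriv (fun t : ℝ =>
      (1 / (Nat.factorial q : ℝ)) * (t ^ 2 / (4 * σ ^ 2)) ^ q
        * Real.exp (-(t ^ 2 / (4 * σ ^ 2)))) θ) ^ 2 /
      ((1 / (Nat.factorial q : ℝ)) * (θ ^ 2 / (4 * σ ^ 2)) ^ q
        * Real.exp (-(θ ^ 2 / (4 * σ ^ 2))))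
      = (N / (σ ^ 2 * (θ ^ 2 / (4 * σ ^ 2))) * Real.exp (-(θ ^ 2 / (4 * σ ^ 2))))
        * (((q : ℝ) - θ ^ 2 / (4 * σ ^ 2)) ^ 2 * (θ ^ 2 / (4 * σ ^ 2)) ^ q
            / (Nat.factorial q : ℝ)) := by
    intro q
    rw [hd q]
    have hfac : (Nat.factorial q : ℝ) ≠ 0 := by positivity
    have hexp : Real.exp (-(θ ^ 2 / (4 * σ ^ 2))) ≠ 0 := Real.exp_ne_zero _
    have hxne : θ ^ 2 / (4 * σ ^ 2) ≠ 0 := ne_of_gt hx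
    rcases q with _ | n
    · field_simp
      ring
    · have hsub : n + 1 - 1 = n := rfl
      rw [hsub]
      have hfn : (Nat.factorial (n + 1) : ℝ) ≠ 0 := by positivity
      have hσne : σ ≠ 0 := hσ.ne'
      field_simp
      ring_nf
      field_simp
  rw [tsum_congr key, tsum_mul_left, poisson_var _ hx.le, Real.exp_neg]
  field_simp
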